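/- Let π be a set of primes and G a π-divisible nilpotent group (every element of G has a p-th root in G for each p ∈ π). Then every term Z_i(G) of the upper central series of G is π-divisible as well. -/

import Mathlib

open Subgroup QuotientGroup

private lemma aux_pow_left {G : Type*} [Group G] (h g : G)
    (hc : h * g * h⁻¹ * g⁻¹ ∈ Subgroup.center G) :
    ∀ k : ℕ, h ^ k * g * (h ^ k)⁻¹ * g⁻¹ = (h * g * h⁻¹ * g⁻¹) ^ k := by
  intro k
  induction k with
  | zero => group
  | succ k ih =>
    have hcent : h * (h * g * h⁻¹ * g⁻¹) ^ k = (h * g * h⁻¹ * g⁻¹) ^ k * h :=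
      Subgroup.mem_center_iff.mp (pow_mem hc k) h
    have e1 : h ^ k * g * (h ^ k)⁻¹ = (h * g * h⁻¹ * g⁻¹) ^ k * g := by
      rw [← ih]; group
    calc h ^ (k + 1) * g * (h ^ (k + 1))⁻¹ * g⁻¹
        = h * (h ^ k * g * (h ^ k)⁻¹) * h⁻¹ * g⁻¹ := by group
      _ = h * ((h * g * h⁻¹ * g⁻¹) ^ k * g) * h⁻¹ * g⁻¹ := by rw [e1]
      _ = h * (h * g * h⁻¹ * g⁻¹) ^ k * (g * h⁻¹ * g⁻¹) := by group
      _ = (h * g * h⁻¹ * g⁻¹) ^ k * h * (g * h⁻¹ * g⁻¹) := by rw [hcent]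
      _ = (h * g * h⁻¹ * g⁻¹) ^ k * (h * g * h⁻¹ * g⁻¹) := by group
      _ = (h * g * h⁻¹ * g⁻¹) ^ (k + 1) := (pow_succ _ _).symm

private lemma aux_pow_right {G : Type*} [Group G] (h g : G)
    (hc : h * g * h⁻¹ * g⁻¹ ∈ Subgroup.center G) :
    ∀ k : ℕ, h * g ^ k * h⁻¹ * (g ^ k)⁻¹ = (h * g * h⁻¹ * g⁻¹) ^ k := by
  intro k
  induction k with
  | zero => group
  | succ k ih =>
    have hcent : h * g * h⁻¹ * (h * g * h⁻¹ * g⁻¹) ^ k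
        = (h * g * h⁻¹ * g⁻¹) ^ k * (h * g * h⁻¹) :=
      Subgroup.mem_center_iff.mp (pow_mem hc k) (h * g * h⁻¹)
    calc h * g ^ (k + 1) * h⁻¹ * (g ^ (k + 1))⁻¹
        = h * g * h⁻¹ * (h * g ^ k * h⁻¹ * (g ^ k)⁻¹) * g⁻¹ := by group
      _ = h * g * h⁻¹ * (h * g * h⁻¹ * g⁻¹) ^ k * g⁻¹ := by rw [ih]
      _ = (h * g * h⁻¹ * g⁻¹) ^ k * (h * g * h⁻¹) * g⁻¹ := by rw [hcent]
      _ = (h * g * h⁻¹ * g⁻¹) ^ k * (h * g * h⁻¹ * g⁻¹) := by group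
      _ = (h * g * h⁻¹ * g⁻¹) ^ (k + 1) := (pow_succ _ _).symm

private lemma root_center (p : ℕ) : ∀ n : ℕ, ∀ (G : Type u) [Group G] [Group.IsNilpotent G],
    Group.nilpotencyClass G ≤ n → (∀ g : G, ∃ h : G, h ^ p = g) →
    ∀ h : G, h ^ p ∈ Subgroup.center G → h ∈ Subgroup.center G := by
  intro n
  induction n with
  | zero =>
    intro G _ _ hcls _ h _
    have : Subsingleton G := nilpotencyClass_zero_iff_subsingleton.mp (Nat.le_zero.mp hcls)
    exact Subgroup.mem_center_iff.mpr fun g => Subsingleton.elim _ _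
  | succ n ih =>
    intro G _ _ hcls hdiv h hp
    -- pass to the quotient by the center
    have hclsQ : Group.nilpotencyClass (G ⧸ Subgroup.center G) ≤ n := by
      rw [nilpotencyClass_quotient_center]; omega
    have hdivQ : ∀ q : G ⧸ Subgroup.center G, ∃ r, r ^ p = q := by
      intro q
      obtain ⟨g, rfl⟩ := QuotientGroup.mk_surjective q
      obtain ⟨k, hk⟩ := hdiv g
      exact ⟨QuotientGroup.mk k, by rw [← hk]; rfl⟩
    have hq : ((h : G ⧸ Subgroup.center G)) ^ p ∈ Subgroup.center _ := by
      have : ((h : G ⧸ Subgroup.center G)) ^ p = 1 := by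
        rw [← QuotientGroup.mk_pow, QuotientGroup.eq_one_iff]
        exact hp
      rw [this]; exact one_mem _
    have hq2 : (h : G ⧸ Subgroup.center G) ∈ Subgroup.center _ :=
      ih _ hclsQ hdivQ _ hq
    -- hence h ∈ Z₂(G), i.e. all commutators with h are central
    have h2 : h ∈ Subgroup.upperCentralSeries G 2 := by
      rw [show (2 : ℕ) = Nat.succ 1 from rfl,
        ← Subgroup.comap_upperCentralSeries_quotient_center 1]
      simpa [Subgroup.upperCentralSeries_one] using hq2
    have hc : ∀ g : G, h * g * h⁻¹ * g⁻¹ ∈ Subgroup.center G := by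
      intro g
      have := (Subgroup.mem_upperCentralSeries_succ_iff).mp h2 g
      simpa [Subgroup.upperCentralSeries_one, commutatorElement_def] using this
    -- now show h is central
    refine Subgroup.mem_center_iff.mpr fun g => ?_
    obtain ⟨k, hk⟩ := hdiv g
    have hcp : (h * k * h⁻¹ * k⁻¹) ^ p = 1 := by
      rw [← aux_pow_left h k (hc k) p]
      have : h ^ p * k = k * h ^ p := (Subgroup.mem_center_iff.mp hp k).symm
      rw [this]; group
    have : h * k ^ p * h⁻¹ * (k ^ p)⁻¹ = 1 := by
      rw [aux_pow_right h k (hc k) p, hcp]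
    rw [hk] at this
    have := mul_eq_one_iff_eq_inv.mp this
    calc g * h = (h * g * h⁻¹ * g⁻¹) * (g * h) := by rw [this]; group
      _ = h * g := by group

private lemma root_ucs (p : ℕ) : ∀ i : ℕ, ∀ (G : Type u) [Group G] [Group.IsNilpotent G],
    (∀ g : G, ∃ h : G, h ^ p = g) →
    ∀ h : G, h ^ p ∈ Subgroup.upperCentralSeries G (i + 1) → h ∈ Subgroup.upperCentralSeries G (i + 1) := by
  intro i
  induction i with
  | zero =>
    intro G _ _ hdiv h hp
    rw [Subgroup.upperCentralSeries_one] at hp ⊢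
    exact root_center p (Group.nilpotencyClass G) G le_rfl hdiv h hp
  | succ i ih =>
    intro G _ _ hdiv h hp
    have hdivQ : ∀ q : G ⧸ Subgroup.center G, ∃ r, r ^ p = q := by
      intro q
      obtain ⟨g, rfl⟩ := QuotientGroup.mk_surjective q
      obtain ⟨k, hk⟩ := hdiv g
      exact ⟨QuotientGroup.mk k, by rw [← hk]; rfl⟩
    rw [← Subgroup.comap_upperCentralSeries_quotient_center (i + 1)] at hp ⊢
    rw [Subgroup.mem_comap] at hp ⊢
    have : ((QuotientGroup.mk' (Subgroup.center G)) h) ^ p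
        ∈ Subgroup.upperCentralSeries (G ⧸ Subgroup.center G) (i + 1) := by
      rw [← map_pow]; exact hp
    exact ih _ hdivQ _ this

/-- In a π-divisible nilpotent group, every term of the upper central series
is π-divisible. -/
theorem upperCentralSeries_pi_divisible
    {G : Type*} [Group G] [Group.IsNilpotent G]
    (π : Set ℕ) (hπ : ∀ p ∈ π, p.Prime)
    (hdiv : ∀ g : G, ∀ p ∈ π, ∃ h : G, h ^ p = g) :
    ∀ i : ℕ, ∀ z ∈ _root_.upperCentralSeries G i, ∀ p ∈ π,
      ∃ w ∈ _root_.upperCentralSeries G i, w ^ p = z := by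
  intro i z hz p hp
  cases i with
  | zero =>
    rw [show _root_.upperCentralSeries G 0 = ⊥ from Subgroup.upperCentralSeries_zero G, Subgroup.mem_bot] at hz
    exact ⟨1, one_mem _, by rw [one_pow, hz]⟩
  | succ i =>
    obtain ⟨h, hh⟩ := hdiv z p hp
    refine ⟨h, ?_, hh⟩
    exact root_ucs p i G (fun g => hdiv g p hp) h (by rw [hh]; exact hz)
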